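/- arXiv:1601.03954 — 2 statements merged into one kernel-verified Lean document; each statement's English description precedes it below -/
import Mathlib

section
/- Let f be a root with |f| > 1 of X² − aX − b = 0, where a ∈ F_q[T] has degree d > 0 and b ∈ F_q^×, and let Q_n be the associated recursive sequence Q_0 = 1, Q_1 = a, Q_{n+1} = a·Q_n + b·Q_{n−1}. Then for all n ≥ 0, |Q_n·f − Q_{n+1}| = q^{−(n+1)d}. In particular ‖Q_n·f‖ = q^{−(n+1)d} < 1, where ‖x‖ denotes the distance from x to the nearest element of A, and Q_{n+1} is the element of A closest to Q_n·f. -/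
open Polynomial

/-- `‖x‖`: the distance from `x ∈ K` to the nearest element of `A = F_q[T]` (embedded via `ι`),
with respect to the absolute value `v`. -/
noncomputable def pnorm {Fq K : Type*} [Field Fq] [Field K]
    (ι : Polynomial Fq →+* K) (v : AbsoluteValue K ℝ) (x : K) : ℝ :=
  sInf (Set.range fun p : Polynomial Fq => v (x - ι p))

/-- Ultrametric equality when the valuations differ. -/
lemma ultra_eq {K : Type*} [Field K] (v : AbsoluteValue K ℝ)
    (hna : ∀ x y : K, v (x + y) ≤ max (v x) (v y)) {x y : K} (h : v y < v x) :
    v (x + y) = v x := by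
  refine le_antisymm ((hna x y).trans (by simp [le_of_lt h])) ?_
  have h2 : v x = v ((x + y) + (-y)) := by ring_nf
  have h3 : v (-y) = v y := v.map_neg y
  have := hna (x + y) (-y)
  rw [← h2, h3] at this
  rcases max_cases (v (x + y)) (v y) with ⟨he, _⟩ | ⟨he, _⟩
  · rw [he] at this; exact this
  · rw [he] at this; exact absurd this (not_le.mpr h)

/-- For `f` the root with `|f| > 1` of `X² - aX - b` (`deg a = d > 0`,
`b ∈ F_q^×`) and `Q_n` the recursive sequence `Q_0 = 1, Q_1 = a, Q_{n+1} = a Q_n + b Q_{n-1}`,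
one has `|Q_n f - Q_{n+1}| = q^{-(n+1)d}`, hence `‖Q_n f‖ = q^{-(n+1)d} < 1` and `Q_{n+1}` is
the element of `A` closest to `Q_n f`. -/
theorem stmt_3 {Fq K : Type*} [Field Fq] [Fintype Fq] [Field K]
    (ι : Polynomial Fq →+* K) (v : AbsoluteValue K ℝ)
    (hna : ∀ x y : K, v (x + y) ≤ max (v x) (v y))
    (hdeg : ∀ g : Polynomial Fq, g ≠ 0 → v (ι g) = (Fintype.card Fq : ℝ) ^ g.natDegree)
    (a : Polynomial Fq) (d : ℕ) (hda : a.natDegree = d) (hd : 0 < d)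
    (b : Fq) (hb : b ≠ 0)
    (f : K) (hroot : f ^ 2 = ι a * f + ι (C b)) (hf : 1 < v f)
    (Q : ℕ → Polynomial Fq) (hQ0 : Q 0 = 1) (hQ1 : Q 1 = a)
    (hQrec : ∀ n, Q (n + 2) = a * Q (n + 1) + C b * Q n) :
    ∀ n : ℕ,
      v (ι (Q n) * f - ι (Q (n + 1))) = ((Fintype.card Fq : ℝ) ^ (d * (n + 1)))⁻¹ ∧
      pnorm ι v (ι (Q n) * f) = ((Fintype.card Fq : ℝ) ^ (d * (n + 1)))⁻¹ ∧
      ((Fintype.card Fq : ℝ) ^ (d * (n + 1)))⁻¹ < 1 ∧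
      ∀ μ : Polynomial Fq, μ ≠ Q (n + 1) →
        v (ι (Q n) * f - ι (Q (n + 1))) < v (ι (Q n) * f - ι μ) := by
  set q : ℝ := (Fintype.card Fq : ℝ) with hqdef
  have hq1 : (1:ℝ) < q := by rw [hqdef]; exact_mod_cast (Fintype.one_lt_card : 1 < Fintype.card Fq)
  have hq0 : (0:ℝ) < q := lt_trans one_pos hq1
  have ha0 : a ≠ 0 := by
    intro h; rw [h, natDegree_zero] at hda; omega
  have hva : v (ι a) = q ^ d := by rw [hdeg a ha0, hda]
  have hvb : v (ι (C b)) = 1 := by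
    rw [hdeg (C b) (by simpa using hb), natDegree_C, pow_zero]
  have hqd1 : (1:ℝ) < q ^ d := one_lt_pow₀ hq1 hd.ne'
  -- v f = q ^ d
  have hvf : v f = q ^ d := by
    have h1 : v (f ^ 2) = v (ι a * f + ι (C b)) := by rw [hroot]
    have h2 : v (ι (C b)) < v (ι a * f) := by
      rw [hvb, v.map_mul, hva]
      calc (1:ℝ) < q ^ d * 1 := by simpa using hqd1
        _ < q ^ d * v f := by
          exact mul_lt_mul_of_pos_left hf (lt_trans one_pos hqd1)
    rw [ultra_eq v hna h2, map_pow, v.map_mul, hva, sq] at h1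
    have hvf0 : v f ≠ 0 := by positivity
    exact mul_right_cancel₀ hvf0 h1
  -- v (f - ι a) = (q ^ d)⁻¹
  have hfma : v (f - ι a) = (q ^ d)⁻¹ := by
    have hm : f * (f - ι a) = ι (C b) := by linear_combination hroot
    have := congrArg v hm
    rw [v.map_mul, hvf, hvb] at this
    field_simp at this ⊢
    linarith
  -- error recurrence
  have hE : ∀ n : ℕ, v (ι (Q n) * f - ι (Q (n + 1))) = ((q ^ d)⁻¹) ^ (n + 1) := by
    intro n
    induction n with
    | zero =>
        rw [hQ0, hQ1, map_one, one_mul, pow_one, hfma]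
    | succ n ih =>
        have hrec : ι (Q (n + 1)) * f - ι (Q (n + 2)) =
            (ι a - f) * (ι (Q n) * f - ι (Q (n + 1))) := by
          rw [hQrec n, map_add, map_mul, map_mul]
          linear_combination (ι (Q n)) * hroot
        rw [hrec, v.map_mul, ih]
        have : v (ι a - f) = (q ^ d)⁻¹ := by
          rw [show ι a - f = -(f - ι a) by ring, v.map_neg, hfma]
        rw [this]; ring
  intro n
  have hflip : ((q ^ d)⁻¹) ^ (n + 1) = (q ^ (d * (n + 1)))⁻¹ := by
    rw [inv_pow, ← pow_mul]
  have hEn := hE n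
  have hlt1 : ((q ^ d)⁻¹) ^ (n + 1) < 1 := by
    apply pow_lt_one₀ (by positivity) _ (by omega)
    rw [inv_lt_one_iff₀]; right; exact hqd1
  -- part 4
  have part4 : ∀ μ : Polynomial Fq, μ ≠ Q (n + 1) →
      v (ι (Q n) * f - ι (Q (n + 1))) < v (ι (Q n) * f - ι μ) := by
    intro μ hμ
    have hsplit : ι (Q n) * f - ι μ =
        ι (Q (n + 1) - μ) + (ι (Q n) * f - ι (Q (n + 1))) := by
      rw [map_sub]; ring
    have hne : Q (n + 1) - μ ≠ 0 := sub_ne_zero.mpr (Ne.symm hμ)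
    have hbig : v (ι (Q n) * f - ι (Q (n + 1))) < v (ι (Q (n + 1) - μ)) := by
      rw [hEn, hdeg _ hne]
      calc ((q ^ d)⁻¹) ^ (n + 1) < 1 := hlt1
        _ ≤ q ^ (Q (n + 1) - μ).natDegree := one_le_pow₀ hq1.le
    calc v (ι (Q n) * f - ι (Q (n + 1))) < v (ι (Q (n + 1) - μ)) := hbig
      _ = v (ι (Q n) * f - ι μ) := by rw [hsplit, ultra_eq v hna hbig]
  refine ⟨by rw [hEn, hflip], ?_, by rw [← hflip]; exact hlt1, part4⟩
  -- pnorm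
  rw [← hflip, ← hEn]
  unfold pnorm
  apply le_antisymm
  · exact csInf_le ⟨0, by rintro x ⟨p, rfl⟩; exact v.nonneg _⟩ ⟨Q (n + 1), rfl⟩
  · apply le_csInf (Set.range_nonempty _)
    rintro x ⟨p, rfl⟩
    by_cases hp : p = Q (n + 1)
    · rw [hp]
    · exact (part4 p hp).le
end

section
/- For ε > 0 define Λ_ε(f) = { λ ∈ A : ‖λf‖ < ε }, an F_q-subspace of A. Let l ∈ {0, …, d−1}, d_l = d−1−l, and N ≥ 0. Then Λ_{q^{−Nd−l}}(f) is precisely the F_q-span of { T^j·Q̄_N : 0 ≤ j ≤ d_l } ∪ { T^j·Q̄_n : 0 ≤ j ≤ d−1, n ≥ N+1 }. -/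
open Polynomial

/-- `Λ_ε(f) = { λ ∈ A : ‖λf‖ < ε }`. -/
def Lambda {Fq K : Type*} [Field Fq] [Field K]
    (ι : Polynomial Fq →+* K) (v : AbsoluteValue K ℝ) (f : K) (ε : ℝ) :
    Set (Polynomial Fq) :=
  {p | pnorm ι v (ι p * f) < ε}

section aux
variable {Fq K : Type*} [Field Fq] [Field K]
  (ι : Polynomial Fq →+* K) (v : AbsoluteValue K ℝ)

lemma pnorm_nonempty (x : K) :
    (Set.range fun p : Polynomial Fq => v (x - ι p)).Nonempty := ⟨_, ⟨0, rfl⟩⟩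

lemma pnorm_bdd (x : K) :
    BddBelow (Set.range fun p : Polynomial Fq => v (x - ι p)) :=
  ⟨0, by rintro r ⟨p, rfl⟩; exact v.nonneg _⟩

lemma pnorm_le (x : K) (p : Polynomial Fq) : pnorm ι v x ≤ v (x - ι p) :=
  csInf_le (pnorm_bdd ι v x) ⟨p, rfl⟩

lemma pnorm_nonneg (x : K) : 0 ≤ pnorm ι v x :=
  le_csInf (pnorm_nonempty ι v x) (by rintro r ⟨p, rfl⟩; exact v.nonneg _)

lemma pnorm_zero : pnorm ι v 0 = 0 :=
  le_antisymm (by simpa using pnorm_le ι v 0 0) (pnorm_nonneg ι v 0)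

variable (hna : ∀ x y : K, v (x + y) ≤ max (v x) (v y))

include hna in
lemma vadd_eq_right {x y : K} (h : v x < v y) : v (x + y) = v y := by
  refine le_antisymm ((hna x y).trans (by rw [max_eq_right h.le])) ?_
  have h2 : v y ≤ max (v (x + y)) (v x) := by
    have := hna (x + y) (-x)
    rwa [add_neg_cancel_comm, v.map_neg] at this
  rcases max_cases (v (x + y)) (v x) with ⟨he, _⟩ | ⟨he, _⟩
  · rwa [he] at h2
  · rw [he] at h2; exact absurd (lt_of_le_of_lt h2 h) (lt_irrefl _)

include hna in
lemma pnorm_neg (x : K) : pnorm ι v (-x) = pnorm ι v x := by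
  unfold pnorm
  congr 1
  ext r
  constructor
  · rintro ⟨p, rfl⟩
    refine ⟨-p, ?_⟩
    show v (x - ι (-p)) = v (-x - ι p)
    have : x - ι (-p) = -(-x - ι p) := by rw [map_neg]; ring
    rw [this, v.map_neg]
  · rintro ⟨p, rfl⟩
    refine ⟨-p, ?_⟩
    show v (-x - ι (-p)) = v (x - ι p)
    have : -x - ι (-p) = -(x - ι p) := by rw [map_neg]; ring
    rw [this, v.map_neg]

include hna in
lemma pnorm_add_le (x y : K) :
    pnorm ι v (x + y) ≤ max (pnorm ι v x) (pnorm ι v y) := by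
  refine le_of_forall_pos_le_add ?_
  intro ε hε
  obtain ⟨r, ⟨p, rfl⟩, hr⟩ := Real.lt_sInf_add_pos (pnorm_nonempty ι v x) hε
  obtain ⟨s, ⟨p', rfl⟩, hs⟩ := Real.lt_sInf_add_pos (pnorm_nonempty ι v y) hε
  have h1 : pnorm ι v (x + y) ≤ v (x + y - ι (p + p')) := pnorm_le ι v _ _
  have h2 : x + y - ι (p + p') = (x - ι p) + (y - ι p') := by rw [map_add]; ring
  rw [h2] at h1
  refine h1.trans ((hna _ _).trans ?_)
  have hxx : sInf (Set.range fun p => v (x - ι p)) = pnorm ι v x := rfl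
  have hyy : sInf (Set.range fun p => v (y - ι p)) = pnorm ι v y := rfl
  rw [hxx] at hr; rw [hyy] at hs
  rw [max_le_iff]
  constructor
  · exact hr.le.trans (add_le_add_left (le_max_left _ _) ε)
  · exact hs.le.trans (add_le_add_left (le_max_right _ _) ε)

include hna in
lemma pnorm_add_eq_left {x y : K} (h : pnorm ι v y < pnorm ι v x) :
    pnorm ι v (x + y) = pnorm ι v x := by
  refine le_antisymm ((pnorm_add_le ι v hna x y).trans (by rw [max_eq_left h.le])) ?_
  have h2 : pnorm ι v x ≤ max (pnorm ι v (x + y)) (pnorm ι v y) := by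
    have := pnorm_add_le ι v hna (x + y) (-y)
    rwa [add_neg_cancel_right, pnorm_neg ι v hna] at this
  rcases max_cases (pnorm ι v (x + y)) (pnorm ι v y) with ⟨he, _⟩ | ⟨he, _⟩
  · rwa [he] at h2
  · rw [he] at h2; exact absurd (lt_of_le_of_lt h2 h) (lt_irrefl _)


variable [Fintype Fq]
  (hdeg : ∀ g : Polynomial Fq, g ≠ 0 → v (ι g) = (Fintype.card Fq : ℝ) ^ g.natDegree)

include hna hdeg in
lemma pnorm_int (g : Polynomial Fq) (ξ : K) (hξ : v ξ < 1) :
    pnorm ι v (ι g + ξ) = v ξ := by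
  refine le_antisymm ?_ (le_csInf (pnorm_nonempty ι v _) ?_)
  · have := pnorm_le ι v (ι g + ξ) g
    rwa [add_sub_cancel_left] at this
  · rintro r ⟨p, rfl⟩
    show v ξ ≤ v (ι g + ξ - ι p)
    by_cases hgp : g = p
    · subst hgp; rw [add_sub_cancel_left]
    · have h1 : ι g + ξ - ι p = ξ + ι (g - p) := by rw [map_sub]; ring
      have hq1 : (1:ℝ) ≤ (Fintype.card Fq : ℝ) ^ (g - p).natDegree :=
        one_le_pow₀ (by exact_mod_cast Nat.one_le_iff_ne_zero.mpr Fintype.card_ne_zero)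
      have h2 : v ξ < v (ι (g - p)) := by
        rw [hdeg _ (sub_ne_zero.mpr hgp)]; exact hξ.trans_le hq1
      rw [h1, vadd_eq_right v hna h2, hdeg _ (sub_ne_zero.mpr hgp)]
      exact hξ.le.trans hq1
    

include hdeg in
lemma pnorm_smul (γ : Fq) (hγ : γ ≠ 0) (x : K) :
    pnorm ι v (ι (C γ) * x) = pnorm ι v x := by
  have hvγ : v (ι (C γ)) = 1 := by
    rw [hdeg _ (by simp [hγ]), natDegree_C, pow_zero]
  unfold pnorm; congr 1; ext r
  constructor
  · rintro ⟨p, rfl⟩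
    refine ⟨C γ⁻¹ * p, ?_⟩
    show v (x - ι (C γ⁻¹ * p)) = v (ι (C γ) * x - ι p)
    have hcc : C γ * (C γ⁻¹ * p) = p := by
      rw [← mul_assoc, ← C_mul, mul_inv_cancel₀ hγ, C_1, one_mul]
    have h1 : ι (C γ) * x - ι p = ι (C γ) * (x - ι (C γ⁻¹ * p)) := by
      rw [mul_sub, ← map_mul, hcc]
    rw [h1, v.map_mul, hvγ, one_mul]
  · rintro ⟨p, rfl⟩
    refine ⟨C γ * p, ?_⟩
    show v (ι (C γ) * x - ι (C γ * p)) = v (x - ι p)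
    have h1 : ι (C γ) * x - ι (C γ * p) = ι (C γ) * (x - ι p) := by
      rw [map_mul, mul_sub]
    rw [h1, v.map_mul, hvγ, one_mul]

end aux

set_option maxHeartbeats 1000000 in
/-- For `0 ≤ l ≤ d-1`, `d_l = d-1-l`, and `N ≥ 0`, the space
`Λ_{q^{-Nd-l}}(f)` is precisely the `F_q`-span of
`{ T^j Q̄_N : 0 ≤ j ≤ d_l } ∪ { T^j Q̄_n : 0 ≤ j ≤ d-1, n ≥ N+1 }`. -/
theorem stmt_7 {Fq K : Type*} [Field Fq] [Fintype Fq] [Field K]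
    (ι : Polynomial Fq →+* K) (v : AbsoluteValue K ℝ)
    (hna : ∀ x y : K, v (x + y) ≤ max (v x) (v y))
    (hdeg : ∀ g : Polynomial Fq, g ≠ 0 → v (ι g) = (Fintype.card Fq : ℝ) ^ g.natDegree)
    (a : Polynomial Fq) (d : ℕ) (hda : a.natDegree = d) (hd : 0 < d)
    (b : Fq) (hb : b ≠ 0)
    (f : K) (hroot : f ^ 2 = ι a * f + ι (C b)) (hf : 1 < v f)
    (Q : ℕ → Polynomial Fq) (hQ0 : Q 0 = 1) (hQ1 : Q 1 = a)
    (hQrec : ∀ n, Q (n + 2) = a * Q (n + 1) + C b * Q n)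
    (c : Fq) (hc : c ≠ 0) (hca : (C c * a).Monic)
    (Qbar : ℕ → Polynomial Fq) (hQbar : ∀ n, Qbar n = C (c ^ n) * Q n)
    (l : ℕ) (hl : l ≤ d - 1) (N : ℕ) :
    Lambda ι v f (((Fintype.card Fq : ℝ) ^ (N * d + l))⁻¹) =
      ↑(Submodule.span Fq
        ({ x : Polynomial Fq | ∃ j ≤ d - 1 - l, x = X ^ j * Qbar N } ∪
         { x : Polynomial Fq | ∃ j ≤ d - 1, ∃ n ≥ N + 1, x = X ^ j * Qbar n })) := by
  classical
  set q : ℝ := (Fintype.card Fq : ℝ) with hq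
  have hq1 : (1:ℝ) < q := by
    rw [hq]; exact_mod_cast Fintype.one_lt_card
  have hq0 : (0:ℝ) < q := lt_trans one_pos hq1
  have hqne : q ≠ 0 := ne_of_gt hq0
  -- basic values of v
  have ha0 : a ≠ 0 := by intro h; rw [h, natDegree_zero] at hda; omega
  have hvb : v (ι (C b)) = 1 := by
    rw [hdeg _ (by simp [hb]), natDegree_C, pow_zero]
  have hva : v (ι a) = q ^ d := by rw [hdeg _ ha0, hda, hq]
  have hf0 : f ≠ 0 := by
    intro h; rw [h, v.map_zero] at hf; linarith
  have hvf : v f = q ^ d := by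
    have hple : (1:ℝ) ≤ q ^ d := one_le_pow₀ hq1.le
    have hlt : v (ι (C b)) < v (ι a * f) := by
      rw [hvb, v.map_mul, hva]; nlinarith
    have h2 : v (f ^ 2) = q ^ d * v f := by
      rw [hroot, add_comm, vadd_eq_right v hna hlt, v.map_mul, hva]
    rw [v.map_pow, pow_two] at h2
    have hvf0 : v f ≠ 0 := by positivity
    exact mul_right_cancel₀ hvf0 h2
  -- leading coefficients and degrees of Q
  have hlca : a.leadingCoeff = c⁻¹ := by
    have h := hca
    unfold Polynomial.Monic at h
    rw [leadingCoeff_mul, leadingCoeff_C] at h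
    exact eq_inv_of_mul_eq_one_right h
  have hc' : c⁻¹ ≠ 0 := inv_ne_zero hc
  have hQfacts : ∀ n, (Q n).natDegree = n * d ∧ (Q n).leadingCoeff = c⁻¹ ^ n := by
    have hstep : ∀ n, (((Q n).natDegree = n * d ∧ (Q n).leadingCoeff = c⁻¹ ^ n) ∧
        ((Q (n+1)).natDegree = (n+1) * d ∧ (Q (n+1)).leadingCoeff = c⁻¹ ^ (n+1))) := by
      intro n
      induction n with
      | zero => exact ⟨⟨by simp [hQ0], by simp [hQ0]⟩, by simp [hQ1, hda], by simp [hQ1, hlca]⟩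
      | succ k ih =>
        refine ⟨ih.2, ?_, ?_⟩
        · rw [hQrec k]
          have hQk1ne : Q (k+1) ≠ 0 := by
            intro h; have := ih.2.2; rw [h, leadingCoeff_zero] at this
            exact (pow_ne_zero _ hc') this.symm
          have hQkne : Q k ≠ 0 := by
            intro h; have := ih.1.2; rw [h, leadingCoeff_zero] at this
            exact (pow_ne_zero _ hc') this.symm
          have hd1 : (a * Q (k+1)).natDegree = (k+2) * d := by
            rw [natDegree_mul ha0 hQk1ne, hda, ih.2.1]; ring
          have hd2 : (C b * Q k).natDegree = k * d := by
            rw [natDegree_mul (by simp [hb]) hQkne, natDegree_C, ih.1.1]; omega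
          have hlt : (C b * Q k).natDegree < (a * Q (k+1)).natDegree := by
            rw [hd1, hd2]; have : k * d < (k + 2) * d := by nlinarith
            exact this
          rw [natDegree_add_eq_left_of_natDegree_lt hlt, hd1]
        · rw [hQrec k]
          have hQk1ne : Q (k+1) ≠ 0 := by
            intro h; have := ih.2.2; rw [h, leadingCoeff_zero] at this
            exact (pow_ne_zero _ hc') this.symm
          have hQkne : Q k ≠ 0 := by
            intro h; have := ih.1.2; rw [h, leadingCoeff_zero] at this
            exact (pow_ne_zero _ hc') this.symm
          have hd1 : (a * Q (k+1)).natDegree = (k+2) * d := by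
            rw [natDegree_mul ha0 hQk1ne, hda, ih.2.1]; ring
          have hd2 : (C b * Q k).natDegree = k * d := by
            rw [natDegree_mul (by simp [hb]) hQkne, natDegree_C, ih.1.1]; omega
          have hlt : (C b * Q k).degree < (a * Q (k+1)).degree := by
            apply degree_lt_degree; rw [hd1, hd2]; nlinarith
          rw [leadingCoeff_add_of_degree_lt' hlt, leadingCoeff_mul, hlca, ih.2.2]
          ring
    exact fun n => (hstep n).1
  have hQne : ∀ n, Q n ≠ 0 := by
    intro n h
    have := (hQfacts n).2; rw [h, leadingCoeff_zero] at this
    exact (pow_ne_zero _ hc') this.symm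
  have hQbarMonic : ∀ n, (Qbar n).Monic := by
    intro n
    unfold Polynomial.Monic
    rw [hQbar, leadingCoeff_mul, leadingCoeff_C, (hQfacts n).2, ← mul_pow,
      mul_inv_cancel₀ hc, one_pow]
  have hQbardeg : ∀ n, (Qbar n).natDegree = n * d := by
    intro n
    rw [hQbar, natDegree_mul (C_ne_zero.mpr (pow_ne_zero n hc)) (hQne n), natDegree_C, (hQfacts n).1]
    omega
  -- the error terms
  set e : ℕ → K := fun n => ι (Q (n+1)) - ι (Q n) * f with he
  have hqd0 : (q:ℝ) ^ d ≠ 0 := pow_ne_zero _ hqne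
  have hve : ∀ n, v (e n) = (q ^ ((n+1)*d))⁻¹ := by
    have hfa : ι a - f = -(ι (C b)) * f⁻¹ := by
      field_simp
      linear_combination -hroot
    have he0 : v (ι a - f) = (q ^ d)⁻¹ := by
      rw [hfa, v.map_mul, v.map_neg, hvb, map_inv₀, hvf, one_mul]
    intro n
    induction n with
    | zero =>
      show v (ι (Q 1) - ι (Q 0) * f) = _
      rw [hQ1, hQ0, map_one, one_mul, he0]
      norm_num
    | succ k ih =>
      have hrec : e (k+1) = (-(ι (C b)) * f⁻¹) * e k := by
        show ι (Q (k+2)) - ι (Q (k+1)) * f = (-(ι (C b)) * f⁻¹) * (ι (Q (k+1)) - ι (Q k) * f)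
        rw [hQrec k, map_add, map_mul, map_mul]
        have h1 : ι a = f + -(ι (C b)) * f⁻¹ := by
          rw [← hfa]; ring
        rw [h1]
        field_simp
        ring
      rw [hrec, v.map_mul, v.map_mul, v.map_neg, hvb, map_inv₀, hvf, ih, one_mul]
      rw [← mul_inv, ← pow_add]
      congr 2
      ring
  -- zpow bridge
  have hzp : ∀ n j : ℕ, q ^ ((j:ℤ) - ((n:ℤ)+1)*(d:ℤ)) = q ^ j * (q ^ ((n+1)*d))⁻¹ := by
    intro n j
    have h1 : ((j:ℤ) - ((n:ℤ)+1)*(d:ℤ)) = (j:ℤ) - (((n+1)*d : ℕ):ℤ) := by push_cast; ring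
    rw [h1, zpow_sub₀ hqne, zpow_natCast, zpow_natCast, div_eq_mul_inv]
  -- pnorm of a basis element times f
  have hPT : ∀ (γ : Fq), γ ≠ 0 → ∀ n j : ℕ, j < d →
      pnorm ι v (ι (C γ * (X ^ j * Qbar n)) * f) = q ^ ((j:ℤ) - ((n:ℤ)+1)*(d:ℤ)) := by
    intro γ hγ n j hj
    rw [map_mul, mul_assoc, pnorm_smul ι v hdeg γ hγ]
    have hen : e n = ι (Q (n+1)) - ι (Q n) * f := rfl
    have hsplit : ι (X ^ j * Qbar n) * f =
        ι (X ^ j * C (c ^ n) * Q (n+1)) + (-(ι (X ^ j * C (c ^ n)))) * e n := by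
      rw [hQbar n, hen, map_mul, map_mul, map_mul, map_mul]
      ring
    have hxc_ne : X ^ j * C (c ^ n) ≠ 0 :=
      mul_ne_zero (pow_ne_zero _ X_ne_zero) (C_ne_zero.mpr (pow_ne_zero n hc))
    have hxc_deg : (X ^ j * C (c ^ n)).natDegree = j := by
      rw [natDegree_mul (pow_ne_zero _ X_ne_zero) (C_ne_zero.mpr (pow_ne_zero n hc)),
        natDegree_X_pow, natDegree_C, add_zero]
    have hv : v ((-(ι (X ^ j * C (c ^ n)))) * e n) = q ^ j * (q ^ ((n+1)*d))⁻¹ := by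
      rw [v.map_mul, v.map_neg, hdeg _ hxc_ne, hve n, hxc_deg]
    have hξ : v ((-(ι (X ^ j * C (c ^ n)))) * e n) < 1 := by
      rw [hv, ← div_eq_mul_inv, div_lt_one (by positivity)]
      exact pow_lt_pow_right₀ hq1 (lt_of_lt_of_le hj (Nat.le_mul_of_pos_left d (Nat.succ_pos n)))
    rw [hsplit, pnorm_int ι v hna hdeg _ _ hξ, hv, hzp]
  -- the exponent function
  set E : ℕ → ℤ := fun m => ((m % d : ℕ) : ℤ) - ((m / d : ℕ) + 1 : ℤ) * (d:ℤ) with hE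
  have hd' : (0:ℤ) < (d:ℤ) := by exact_mod_cast hd
  have hEinj : ∀ m1 m2 : ℕ, E m1 = E m2 → m1 = m2 := by
    intro m1 m2 h12
    simp only [hE] at h12
    have hr1 : m1 % d < d := Nat.mod_lt _ hd
    have hr2 : m2 % d < d := Nat.mod_lt _ hd
    have key : ((m1 % d : ℕ) : ℤ) - ((m2 % d : ℕ) : ℤ) =
        (((m1 / d : ℕ) : ℤ) - ((m2 / d : ℕ) : ℤ)) * d := by linear_combination h12
    have h1 : ((m1 % d : ℕ) : ℤ) < d := by exact_mod_cast hr1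
    have h2 : ((m2 % d : ℕ) : ℤ) < d := by exact_mod_cast hr2
    have h3 : (0:ℤ) ≤ ((m1 % d : ℕ) : ℤ) := Int.natCast_nonneg _
    have h4 : (0:ℤ) ≤ ((m2 % d : ℕ) : ℤ) := Int.natCast_nonneg _
    have hk : ((m1 / d : ℕ) : ℤ) = ((m2 / d : ℕ) : ℤ) := by
      rcases lt_trichotomy ((m1 / d : ℕ) : ℤ) ((m2 / d : ℕ) : ℤ) with h | h | h
      · exfalso
        have hle : ((m1 / d : ℕ) : ℤ) - ((m2 / d : ℕ) : ℤ) ≤ -1 := by omega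
        have := mul_le_mul_of_nonneg_right hle hd'.le
        rw [← key] at this
        linarith
      · exact h
      · exfalso
        have hle : (1:ℤ) ≤ ((m1 / d : ℕ) : ℤ) - ((m2 / d : ℕ) : ℤ) := by omega
        have := mul_le_mul_of_nonneg_right hle hd'.le
        rw [← key] at this
        linarith
    have hj' : ((m1 % d : ℕ) : ℤ) = ((m2 % d : ℕ) : ℤ) := by
      rw [hk] at key; linarith
    have e1 : m1 % d = m2 % d := by exact_mod_cast hj'
    have e2 : m1 / d = m2 / d := by exact_mod_cast hk
    calc m1 = d * (m1 / d) + m1 % d := (Nat.div_add_mod m1 d).symm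
    _ = d * (m2 / d) + m2 % d := by rw [e1, e2]
    _ = m2 := Nat.div_add_mod m2 d
  -- MAIN: exact value of pnorm (ι lam * f)
  have MAIN : ∀ m : ℕ, ∀ lam : Polynomial Fq, lam ≠ 0 → lam.natDegree = m →
      ∃ m' : ℕ, m' ≤ m ∧ pnorm ι v (ι lam * f) = q ^ (E m') ∧ E m ≤ E m' := by
    intro m
    induction m using Nat.strong_induction_on with
    | _ m ih =>
      intro lam hlam hm
      have hjd : m % d < d := Nat.mod_lt _ hd
      have htm : (X ^ (m % d) * Qbar (m / d)).Monic := (monic_X_pow _).mul (hQbarMonic _)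
      have htd : (X ^ (m % d) * Qbar (m / d)).natDegree = m := by
        rw [natDegree_mul (pow_ne_zero _ X_ne_zero) (hQbarMonic _).ne_zero,
          natDegree_X_pow, hQbardeg, add_comm, mul_comm]
        exact Nat.div_add_mod m d
      set t : Polynomial Fq := X ^ (m % d) * Qbar (m / d) with ht
      set γ := lam.leadingCoeff with hγdef
      have hγ : γ ≠ 0 := leadingCoeff_ne_zero.mpr hlam
      have hCγ : C γ ≠ 0 := C_ne_zero.mpr hγ
      set lam' := lam - C γ * t with hlam'
      have hCtd : (C γ * t).natDegree = m := by
        rw [natDegree_mul hCγ htm.ne_zero, natDegree_C, htd]; omega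
      have hCtlc : (C γ * t).leadingCoeff = γ := by
        rw [leadingCoeff_mul, leadingCoeff_C, htm.leadingCoeff, mul_one]
      have hEm : E m = ((m % d : ℕ) : ℤ) - (((m / d : ℕ) : ℤ) + 1) * (d:ℤ) := rfl
      have hPTm : pnorm ι v (ι (C γ * t) * f) = q ^ (E m) := by
        rw [ht, hPT γ hγ (m / d) (m % d) hjd, hEm]
      by_cases h0 : lam' = 0
      · refine ⟨m, le_rfl, ?_, le_rfl⟩
        have hlameq : lam = C γ * t := by
          have := sub_eq_zero.mp h0; exact this
        rw [hlameq]; exact hPTm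
      · have hdegeq : lam.degree = (C γ * t).degree := by
          rw [degree_eq_natDegree hlam, degree_eq_natDegree (mul_ne_zero hCγ htm.ne_zero), hm, hCtd]
        have hdlt : lam'.natDegree < m := by
          have hlt : lam'.degree < lam.degree := degree_sub_lt hdegeq hlam hCtlc.symm
          have := natDegree_lt_natDegree h0 hlt
          omega
        obtain ⟨m2, hm2le, hm2val, hm2E⟩ := ih lam'.natDegree hdlt lam' h0 rfl
        have hsum : ι lam * f = ι (C γ * t) * f + ι lam' * f := by
          rw [hlam', map_sub]; ring
        have hm2ne : m2 ≠ m := by omega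
        have hEne : E m2 ≠ E m := fun h => hm2ne (hEinj _ _ h)
        rcases lt_or_gt_of_ne hEne with hltE | hgtE
        · refine ⟨m, le_rfl, ?_, le_rfl⟩
          rw [hsum, pnorm_add_eq_left ι v hna ?_, hPTm]
          rw [hm2val, hPTm]
          exact zpow_lt_zpow_right₀ hq1 hltE
        · refine ⟨m2, by omega, ?_, le_of_lt hgtE⟩
          rw [hsum, add_comm, pnorm_add_eq_left ι v hna ?_, hm2val]
          rw [hm2val, hPTm]
          exact zpow_lt_zpow_right₀ hq1 hgtE
  -- conclusion
  have hεz : ((q:ℝ) ^ (N*d+l))⁻¹ = q ^ (-(((N*d+l) : ℕ) : ℤ)) := by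
    rw [zpow_neg, zpow_natCast]
  set S : Set (Polynomial Fq) :=
    ({ x : Polynomial Fq | ∃ j ≤ d - 1 - l, x = X ^ j * Qbar N } ∪
     { x : Polynomial Fq | ∃ j ≤ d - 1, ∃ n ≥ N + 1, x = X ^ j * Qbar n }) with hS
  have DIR : ∀ m : ℕ, ∀ μ : Polynomial Fq, μ.natDegree = m →
      pnorm ι v (ι μ * f) < (q ^ (N*d+l))⁻¹ → μ ∈ Submodule.span Fq S := by
    intro m
    induction m using Nat.strong_induction_on with
    | _ m ih =>
      intro μ hμm hpn
      by_cases h0 : μ = 0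
      · subst h0; exact Submodule.zero_mem _
      obtain ⟨m', hm'le, hval, hEle⟩ := MAIN m μ h0 hμm
      have hlt' : E m' < -(((N*d+l) : ℕ) : ℤ) := by
        rw [hval, hεz] at hpn
        exact (zpow_lt_zpow_iff_right₀ hq1).mp hpn
      have hEmlt : E m < -(((N*d+l) : ℕ) : ℤ) := lt_of_le_of_lt hEle hlt'
      have hEmeq : E m = ((m % d : ℕ) : ℤ) - (((m / d : ℕ) : ℤ) + 1) * (d:ℤ) := rfl
      have hkey : ((m % d : ℕ) : ℤ) + (N:ℤ)*(d:ℤ) + (l:ℤ) < (((m / d : ℕ) : ℤ)+1)*(d:ℤ) := by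
        rw [hEmeq] at hEmlt
        push_cast at hEmlt ⊢
        linarith
      have hjd : m % d < d := Nat.mod_lt _ hd
      have htS : (X ^ (m % d) * Qbar (m / d)) ∈ S := by
        rcases lt_or_ge (m / d) N with hnN | hnN
        · exfalso
          have h5 : ((m / d : ℕ) : ℤ) + 1 ≤ (N:ℤ) := by exact_mod_cast hnN
          have h6 := mul_le_mul_of_nonneg_right h5 hd'.le
          have h7 : (0:ℤ) ≤ ((m % d : ℕ) : ℤ) := Int.natCast_nonneg _
          have h8 : (0:ℤ) ≤ (l:ℤ) := Int.natCast_nonneg _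
          linarith
        · rcases eq_or_lt_of_le hnN with heq | hgt
          · rw [hS]
            apply Set.mem_union_left
            refine ⟨m % d, ?_, by rw [← heq]⟩
            have h9 : ((m % d : ℕ) : ℤ) + (l:ℤ) < (d:ℤ) := by
              rw [← heq] at hkey; push_cast at hkey ⊢; linarith
            have h10 : m % d + l < d := by exact_mod_cast h9
            omega
          · rw [hS]
            apply Set.mem_union_right
            exact ⟨m % d, by omega, m / d, by omega, rfl⟩
      have htm : (X ^ (m % d) * Qbar (m / d)).Monic := (monic_X_pow _).mul (hQbarMonic _)
      have htd : (X ^ (m % d) * Qbar (m / d)).natDegree = m := by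
        rw [natDegree_mul (pow_ne_zero _ X_ne_zero) (hQbarMonic _).ne_zero,
          natDegree_X_pow, hQbardeg, add_comm, mul_comm]
        exact Nat.div_add_mod m d
      set t : Polynomial Fq := X ^ (m % d) * Qbar (m / d) with ht
      set γ := μ.leadingCoeff with hγdef
      have hγ : γ ≠ 0 := leadingCoeff_ne_zero.mpr h0
      have hCγ : C γ ≠ 0 := C_ne_zero.mpr hγ
      set μ' := μ - C γ * t with hμ'
      have htSpan : C γ * t ∈ Submodule.span Fq S := by
        rw [← smul_eq_C_mul]
        exact Submodule.smul_mem _ _ (Submodule.subset_span htS)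
      by_cases hz : μ' = 0
      · have heq2 : μ = C γ * t := sub_eq_zero.mp hz
        rw [heq2]; exact htSpan
      · have hCtd : (C γ * t).natDegree = m := by
          rw [natDegree_mul hCγ htm.ne_zero, natDegree_C, htd]; omega
        have hCtlc : (C γ * t).leadingCoeff = γ := by
          rw [leadingCoeff_mul, leadingCoeff_C, htm.leadingCoeff, mul_one]
        have hdegeq : μ.degree = (C γ * t).degree := by
          rw [degree_eq_natDegree h0, degree_eq_natDegree (mul_ne_zero hCγ htm.ne_zero), hμm, hCtd]
        have hdlt : μ'.natDegree < m := by
          have hlt2 : μ'.degree < μ.degree := degree_sub_lt hdegeq h0 hCtlc.symm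
          have := natDegree_lt_natDegree hz hlt2
          omega
        have hPTm : pnorm ι v (ι (C γ * t) * f) = q ^ (E m) := by
          rw [ht, hPT γ hγ (m / d) (m % d) hjd, hEmeq]
        have hPTlt : pnorm ι v (ι (C γ * t) * f) < (q ^ (N*d+l))⁻¹ := by
          rw [hPTm, hεz]; exact zpow_lt_zpow_right₀ hq1 hEmlt
        have hμ'pn : pnorm ι v (ι μ' * f) < (q ^ (N*d+l))⁻¹ := by
          have hsum : ι μ' * f = ι μ * f + (-(ι (C γ * t) * f)) := by
            rw [hμ', map_sub]; ring
          have hle := pnorm_add_le ι v hna (ι μ * f) (-(ι (C γ * t) * f))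
          rw [← hsum, pnorm_neg ι v hna] at hle
          exact lt_of_le_of_lt hle (max_lt hpn hPTlt)
        have hstep := ih μ'.natDegree hdlt μ' rfl hμ'pn
        have heq3 : μ = μ' + C γ * t := by rw [hμ']; ring
        rw [heq3]
        exact Submodule.add_mem _ hstep htSpan
  ext lam
  simp only [Lambda, Set.mem_setOf_eq, SetLike.mem_coe]
  constructor
  · intro h
    exact DIR lam.natDegree lam rfl h
  · intro h
    induction h using Submodule.span_induction with
    | mem x hx =>
      rw [hS] at hx
      rcases hx with ⟨j, hj, rfl⟩ | ⟨j, hj, n, hn, rfl⟩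
      · have hjd : j < d := by omega
        have h1 : pnorm ι v (ι (X ^ j * Qbar N) * f) = q ^ ((j:ℤ) - ((N:ℤ)+1)*(d:ℤ)) := by
          have h2 := hPT 1 one_ne_zero N j hjd
          rwa [C_1, one_mul] at h2
        rw [h1, hεz]
        apply zpow_lt_zpow_right₀ hq1
        have h3 : j + l < d := by omega
        have h4 : ((j:ℤ)) + (l:ℤ) < (d:ℤ) := by exact_mod_cast h3
        push_cast
        linarith
      · have hjd : j < d := by omega
        have h1 : pnorm ι v (ι (X ^ j * Qbar n) * f) = q ^ ((j:ℤ) - ((n:ℤ)+1)*(d:ℤ)) := by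
          have h2 := hPT 1 one_ne_zero n j hjd
          rwa [C_1, one_mul] at h2
        rw [h1, hεz]
        apply zpow_lt_zpow_right₀ hq1
        have h5 : ((N:ℤ)+2) ≤ (n:ℤ)+1 := by exact_mod_cast Nat.succ_le_succ hn
        have h6 := mul_le_mul_of_nonneg_right h5 hd'.le
        have h7 : (j:ℤ) ≤ (d:ℤ) - 1 := by
          have : (j:ℤ) < (d:ℤ) := by exact_mod_cast hjd
          linarith
        have h8 : (l:ℤ) ≤ (d:ℤ) - 1 := by
          have h9 : l < d := by omega
          have : (l:ℤ) < (d:ℤ) := by exact_mod_cast h9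
          linarith
        push_cast
        linarith
    | zero =>
      rw [map_zero, zero_mul, pnorm_zero]
      positivity
    | add x y hx hy ihx ihy =>
      rw [map_add, add_mul]
      exact lt_of_le_of_lt (pnorm_add_le ι v hna _ _) (max_lt ihx ihy)
    | smul γ x hx ihx =>
      rw [smul_eq_C_mul, map_mul, mul_assoc]
      by_cases hγ : γ = 0
      · subst hγ
        rw [C_0, map_zero, zero_mul, pnorm_zero]
        positivity
      · rw [pnorm_smul ι v hdeg γ hγ]
        exact ihx
end
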